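/- Let G be a simplicial group, α = (i_l,…,i_1), β = (j_m,…,j_1) ∈ S(n) with α ∩ β = ∅ and β < α, x ∈ NG_{n−#α}, y ∈ NG_{n−#β}, and v = [s_α x, s_β y]. Then for each l ∈ [n−1], there exist elements z_i ∈ ∩_{j=0}^{i-1} Ker(d_j) ⊆ G_{n-1} (for 1 ≤ i ≤ l) such that p_l p_{l-1} ⋯ p_1(v) = v · ∏_{i=1}^{l} s_i(z_i)^{-1}, where p_j(w) = w·s_j d_j(w)^{-1}. -/

import Mathlib

/-- A simplicial group: groups `G n` with face maps `d n i : G (n+1) →* G n`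
and degeneracies `s n i : G n →* G (n+1)` satisfying the simplicial identities
(asserted in the meaningful index ranges). -/
structure SGrp where
  G : ℕ → Type
  grp : ∀ n, Group (G n)
  d : (n : ℕ) → ℕ → (G (n+1) →* G n)
  s : (n : ℕ) → ℕ → (G n →* G (n+1))
  dd : ∀ n i j, i < j → j ≤ n + 2 → ∀ x,
    d n i (d (n+1) j x) = d n (j-1) (d (n+1) i x)
  ds_lt : ∀ n i j, i < j → j ≤ n + 1 → ∀ x,
    d (n+1) i (s (n+1) j x) = s n (j-1) (d n i x)
  ds_eq : ∀ n j, j ≤ n → ∀ x, d n j (s n j x) = x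
  ds_succ : ∀ n j, j ≤ n → ∀ x, d n (j+1) (s n j x) = x
  ds_gt : ∀ n i j, j + 1 < i → i ≤ n + 2 → ∀ x,
    d (n+1) i (s (n+1) j x) = s n j (d n (i-1) x)
  ss : ∀ n i j, i ≤ j → j ≤ n → ∀ x,
    s (n+1) i (s n j x) = s (n+1) (j+1) (s n i x)

attribute [instance] SGrp.grp

/-- Moore complex: `NG 0 = G 0`, `NG (n+1) = ⋂_{i ≤ n} ker (d_i)`. -/
def SGrp.NG (X : SGrp) : (n : ℕ) → Subgroup (X.G n)
  | 0 => ⊤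
  | (n+1) => ⨅ i ∈ Finset.range (n+1), (X.d n i).ker

/-- Transport along an equality of dimensions. -/
def SGrp.castHom (X : SGrp) {a b : ℕ} (h : a = b) : X.G a →* X.G b where
  toFun x := h ▸ x
  map_one' := by subst h; rfl
  map_mul' x y := by subst h; rfl

/-- Composite degeneracy `s_α = s_{i_l} ⋯ s_{i_1}` for `α = [i_l, …, i_1]`
(head applied last). -/
def SGrp.sComp (X : SGrp) : (m : ℕ) → (α : List ℕ) → (X.G m →* X.G (m + α.length))
  | _, [] => MonoidHom.id _
  | m, i :: rest => (X.s (m + rest.length) i).comp (X.sComp m rest)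

/-- `s_α : G_{n-#α} →* G_n` for `α ∈ S(n)` (the trivial hom if lengths mismatch). -/
def SGrp.sMapN (X : SGrp) (n : ℕ) (α : List ℕ) : X.G (n - α.length) →* X.G n :=
  if h : n - α.length + α.length = n then
    (X.castHom h).comp (X.sComp (n - α.length) α) else 1

/-- `p_j(z) = z ⬝ (s_j d_j z)⁻¹` on `G (n+1)`. -/
def SGrp.p (X : SGrp) (n j : ℕ) (z : X.G (n+1)) : X.G (n+1) :=
  z * (X.s n j (X.d n j z))⁻¹

/-- `pComp n j = p_j ∘ ⋯ ∘ p_0` on `G (n+1)`. -/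
def SGrp.pComp (X : SGrp) (n : ℕ) : ℕ → X.G (n+1) → X.G (n+1)
  | 0 => X.p n 0
  | (j+1) => fun z => X.p n (j+1) (X.pComp n j z)

/-- `pComp1 n l = p_l ∘ ⋯ ∘ p_1` on `G (n+1)` (identity for `l = 0`). -/
def SGrp.pComp1 (X : SGrp) (n : ℕ) : ℕ → X.G (n+1) → X.G (n+1)
  | 0 => id
  | (j+1) => fun z => X.p n (j+1) (X.pComp1 n j z)

/-- The ordering of `S(n)` from the paper: `α < β` iff comparing from the
smallest indices (the reversed lists), either the first difference has the
index of `α` larger, or `α`'s indices (from the small end) form a proper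
prefix of `β`'s. -/
def Slt (α β : List ℕ) : Prop := List.Lex (· > ·) α.reverse β.reverse

/-- `α` represents a nonidentity element of `S(N)`: a nonempty strictly
decreasing tuple of indices `< N`. -/
def SIdx (N : ℕ) (α : List ℕ) : Prop :=
  α ≠ [] ∧ α.Chain' (· > ·) ∧ α.length ≤ N ∧ ∀ i ∈ α, i < N


namespace SGrp

variable (X : SGrp)

theorem castHom_castHom {a b c : ℕ} (h : a = b) (h' : b = c) (z : X.G a) :
    X.castHom h' (X.castHom h z) = X.castHom (h.trans h') z := by
  subst h; subst h'; rfl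

theorem castHom_s {a b : ℕ} (h : a = b) (h2 : a + 1 = b + 1) (i : ℕ) (z : X.G a) :
    X.castHom h2 (X.s a i z) = X.s b i (X.castHom h z) := by
  subst h; rfl

theorem castHom_sComp {a b : ℕ} (h : a = b) (α : List ℕ)
    (h2 : a + α.length = b + α.length) (z : X.G a) :
    X.castHom h2 (X.sComp a α z) = X.sComp b α (X.castHom h z) := by
  subst h; rfl

theorem d_cast_eq_one {a b : ℕ} (hab : a = b) (i : ℕ) (z : X.G (a + 1))
    (h2 : a + 1 = b + 1) (hz : X.d a i z = 1) :
    X.d b i (X.castHom h2 z) = 1 := by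
  subst hab; exact hz

theorem castHom_mem_NG {a b : ℕ} (h : a = b) (z : X.G a) (hz : z ∈ X.NG a) :
    X.castHom h z ∈ X.NG b := by
  subst h; exact hz

theorem NG_d {m : ℕ} (i : ℕ) (hi : i < m + 1) (x : X.G (m + 1))
    (hx : x ∈ X.NG (m + 1)) : X.d m i x = 1 := by
  simp only [SGrp.NG, Subgroup.mem_iInf, Finset.mem_range] at hx
  exact hx i hi

theorem len_le_of_sdec (N : ℕ) (α : List ℕ) (hch : α.Chain' (· > ·))
    (hpos : ∀ i ∈ α, 1 ≤ i) (hbd : ∀ i ∈ α, i ≤ N) : α.length ≤ N := by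
  classical
  have hpw : α.Pairwise (· > ·) := List.isChain_iff_pairwise.mp hch
  have hnd : α.Nodup := hpw.imp fun h => (Nat.ne_of_gt h)
  have hsub : α.toFinset ⊆ Finset.Icc 1 N := by
    intro a ha
    rw [List.mem_toFinset] at ha
    exact Finset.mem_Icc.mpr ⟨hpos a ha, hbd a ha⟩
  have hcard := Finset.card_le_card hsub
  rw [List.toFinset_card_of_nodup hnd, Nat.card_Icc] at hcard
  omega

theorem d0_sComp (α : List ℕ) (m : ℕ) (hch : α.Chain' (· > ·))
    (hpos : ∀ i ∈ α, 1 ≤ i) (hbd : ∀ i ∈ α, i ≤ m + α.length)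
    (x : X.G (m + 1)) (hx : X.d m 0 x = 1) :
    X.d (m + α.length) 0
      (X.castHom (show m + 1 + α.length = (m + α.length) + 1 by omega)
        (X.sComp (m + 1) α x)) = 1 := by
  induction α with
  | nil => exact hx
  | cons i rest ih =>
    have hi1 : 1 ≤ i := hpos i (List.mem_cons_self)
    have hi2 : i ≤ m + rest.length + 1 := by
      have := hbd i (List.mem_cons_self)
      simp at this; omega
    have hlt : ∀ e ∈ rest, e < i := by
      have hpw := List.isChain_iff_pairwise.mp hch
      exact (List.pairwise_cons.mp hpw).1
    have hmid : m + 1 + rest.length = (m + rest.length) + 1 := by omega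
    have ih' := ih (List.IsChain.tail hch)
      (fun e he => hpos e (List.mem_cons_of_mem _ he))
      (fun e he => by have := hlt e he; omega)
    have ihx : X.d (m + rest.length) 0
        (X.castHom hmid (X.sComp (m + 1) rest x)) = 1 := ih'
    show X.d ((m + rest.length) + 1) 0
      (X.castHom (show (m + 1 + rest.length) + 1 = ((m + rest.length) + 1) + 1 by omega)
        (X.s (m + 1 + rest.length) i (X.sComp (m + 1) rest x))) = 1
    rw [X.castHom_s hmid _ i]
    rw [X.ds_lt (m + rest.length) 0 i (by omega) (by omega)]
    rw [ihx]
    simp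

theorem d0_sMapN (n : ℕ) (α : List ℕ) (hch : α.Chain' (· > ·))
    (hpos : ∀ i ∈ α, 1 ≤ i) (hbd : ∀ i ∈ α, i < n + 2)
    (x : X.G (n + 2 - α.length)) (hx : x ∈ X.NG (n + 2 - α.length)) :
    X.d (n + 1) 0 (X.sMapN (n + 2) α x) = 1 := by
  have hlen : α.length ≤ n + 1 :=
    len_le_of_sdec (n + 1) α hch hpos (fun i hi => by have := hbd i hi; omega)
  have hm : n + 2 - α.length = (n + 1 - α.length) + 1 := by omega
  have hms : (n + 1 - α.length) + α.length = n + 1 := by omega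
  have h : n + 2 - α.length + α.length = n + 2 := by omega
  have hm2 : (n + 2 - α.length) + α.length = ((n + 1 - α.length) + 1) + α.length := by omega
  have h3 : (n + 1 - α.length) + 1 + α.length = ((n + 1 - α.length) + α.length) + 1 := by omega
  set m := n + 1 - α.length with hmdef
  have x' : X.G (m + 1) := X.castHom hm x
  have hx' : X.d m 0 (X.castHom hm x) = 1 :=
    X.NG_d 0 (by omega) _ (X.castHom_mem_NG hm x hx)
  have key := X.d0_sComp α m hch hpos
    (fun i hi => by have := hbd i hi; omega) (X.castHom hm x) hx'
  have e0 : X.sMapN (n + 2) α x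
      = X.castHom (show (m + α.length) + 1 = n + 2 by omega)
          (X.castHom (show m + 1 + α.length = (m + α.length) + 1 by omega)
            (X.sComp (m + 1) α (X.castHom hm x))) := by
    rw [← X.castHom_sComp hm α hm2 x, X.castHom_castHom, X.castHom_castHom]
    unfold SGrp.sMapN
    rw [dif_pos h]
    rfl
  rw [e0]
  exact X.d_cast_eq_one hms 0 _ _ key

theorem main_ind (n : ℕ) (v : X.G (n + 2)) (hv : X.d (n + 1) 0 v = 1) :
    ∀ l, l ≤ n + 1 → ∃ z : ℕ → X.G (n + 1),
      (∀ i, 1 ≤ i → i ≤ l → ∀ j < i, X.d n j (z i) = 1) ∧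
      (∀ j ≤ l, X.d (n + 1) j (X.pComp1 (n + 1) l v) = 1) ∧
      X.pComp1 (n + 1) l v
        = v * ((List.range l).map (fun i => (X.s (n + 1) (i + 1) (z (i + 1)))⁻¹)).prod := by
  intro l
  induction l with
  | zero =>
    intro _
    refine ⟨fun _ => 1, ?_, ?_, ?_⟩
    · intro i h1 h2; omega
    · intro j hj
      have : j = 0 := by omega
      subst this
      exact hv
    · simp [SGrp.pComp1]
  | succ l ih =>
    intro hl1
    obtain ⟨z, h1, h2, h3⟩ := ih (by omega)
    set w := X.pComp1 (n + 1) l v with hw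
    set znew := X.d (n + 1) (l + 1) w with hzn
    have hznface : ∀ j ≤ l, X.d n j znew = 1 := by
      intro j hj
      rw [hzn, X.dd n j (l + 1) (by omega) (by omega), h2 j hj]
      simp
    have hstep : X.pComp1 (n + 1) (l + 1) v = w * (X.s (n + 1) (l + 1) znew)⁻¹ := rfl
    set z' : ℕ → X.G (n + 1) := fun i => if i = l + 1 then znew else z i with hz'
    have hz1 : z' (l + 1) = znew := if_pos rfl
    have hz2 : ∀ i, i ≠ l + 1 → z' i = z i := fun i hi => if_neg hi
    refine ⟨z', ?_, ?_, ?_⟩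
    · intro i hi1 hi2 j hj
      by_cases hi : i = l + 1
      · subst hi
        rw [hz1]
        exact hznface j (by omega)
      · rw [hz2 i hi]
        exact h1 i hi1 (by omega) j hj
    · intro j hj
      rw [hstep, map_mul, map_inv]
      by_cases hj' : j = l + 1
      · subst hj'
        rw [X.ds_eq (n + 1) (l + 1) (by omega)]
        rw [hzn]
        simp
      · have hjl : j ≤ l := by omega
        rw [X.ds_lt n j (l + 1) (by omega) (by omega)]
        rw [h2 j hjl, hznface j hjl]
        simp
    · rw [hstep, h3, List.range_succ, List.map_append, List.prod_append]
      have hmap : (List.range l).map (fun i => (X.s (n + 1) (i + 1) (z' (i + 1)))⁻¹)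
          = (List.range l).map (fun i => (X.s (n + 1) (i + 1) (z (i + 1)))⁻¹) := by
        refine List.map_congr_left ?_
        intro i hi
        rw [List.mem_range] at hi
        rw [hz2 (i + 1) (by omega)]
      simp only [List.map_cons, List.map_nil, List.prod_cons, List.prod_nil, mul_one]
      rw [hmap, hz1]
      rw [mul_assoc]

end SGrp

open scoped commutatorElement

/-- Lemma 3.2. For disjoint `α, β ∈ S(n)` with `β < α` and
`v = [s_α x, s_β y]`, for each `l ∈ [n-1]` there are `z_i ∈ ⋂_{j<i} Ker d_j`
(in the next dimension down) with `p_l ⋯ p_1(v) = v · ∏_{i=1}^{l} s_i(z_i)⁻¹`.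
(Stated at level `n+2` so both `p` and the lower faces are available.) -/
theorem stmt16 (X : SGrp) (n : ℕ) (α β : List ℕ)
    (hα : SIdx (n+2) α) (hβ : SIdx (n+2) β)
    (hdisj : ∀ i ∈ α, i ∉ β) (hlt : Slt β α)
    (x : X.G (n+2 - α.length)) (y : X.G (n+2 - β.length))
    (hx : x ∈ X.NG (n+2 - α.length)) (hy : y ∈ X.NG (n+2 - β.length))
    (l : ℕ) (hl : l ≤ n + 1) :
    ∃ z : ℕ → X.G (n+1),
      (∀ i, 1 ≤ i → i ≤ l → ∀ j < i, X.d n j (z i) = 1) ∧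
      X.pComp1 (n+1) l ⁅X.sMapN (n+2) α x, X.sMapN (n+2) β y⁆ =
        ⁅X.sMapN (n+2) α x, X.sMapN (n+2) β y⁆ *
          ((List.range l).map (fun i => (X.s (n+1) (i+1) (z (i+1)))⁻¹)).prod := by
  have hv : X.d (n + 1) 0 ⁅X.sMapN (n+2) α x, X.sMapN (n+2) β y⁆ = 1 := by
    rw [map_commutatorElement]
    by_cases h0 : (0 : ℕ) ∈ α
    · have hb : X.d (n + 1) 0 (X.sMapN (n + 2) β y) = 1 := by
        refine X.d0_sMapN n β hβ.2.1 ?_ hβ.2.2.2 y hy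
        intro i hi
        have h0β : (0 : ℕ) ∉ β := hdisj 0 h0
        rcases Nat.eq_zero_or_pos i with h | h
        · exact absurd (h ▸ hi) h0β
        · exact h
      rw [hb]
      simp [commutatorElement_def]
    · have ha : X.d (n + 1) 0 (X.sMapN (n + 2) α x) = 1 := by
        refine X.d0_sMapN n α hα.2.1 ?_ hα.2.2.2 x hx
        intro i hi
        rcases Nat.eq_zero_or_pos i with h | h
        · exact absurd (h ▸ hi) h0
        · exact h
      rw [ha]
      simp [commutatorElement_def]
  obtain ⟨z, hz1, _, hz3⟩ := X.main_ind n _ hv l hl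
  exact ⟨z, hz1, hz3⟩
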